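/- For the quiver $A_{n-1}: 1\to 2\to\dots\to n-1$, the representation $[i;l]$ (one-dimensional spaces at vertices $i,i+1,\dots,i+l-1$ with identity maps between consecutive ones and zero elsewhere) is indecomposable, and every indecomposable representation of $A_{n-1}$ over a field is isomorphic to some $[i;l]$ with $1\le i\le n-1$, $1\le l\le n-i$. -/

import Mathlib

universe u v w

/-- A representation of the linear quiver `A_{N}` : `1 → 2 → ⋯ → N`
(vertices `Fin N`) over a field `k`. -/
structure QuivRep (k : Type u) [Field k] (N : ℕ) where
  V : Fin N → Type v
  [grp : ∀ i, AddCommGroup (V i)]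
  [mod : ∀ i, Module k (V i)]
  f : ∀ (i : Fin N) (h : (i : ℕ) + 1 < N), V i →ₗ[k] V ⟨(i : ℕ) + 1, h⟩

attribute [instance] QuivRep.grp QuivRep.mod

/-- An isomorphism of quiver representations. -/
structure QuivIso (k : Type u) [Field k] (N : ℕ)
    (X : QuivRep.{u, v} k N) (Y : QuivRep.{u, w} k N) where
  φ : ∀ i, X.V i ≃ₗ[k] Y.V i
  comm : ∀ (i : Fin N) (h : (i : ℕ) + 1 < N) (x : X.V i),
    Y.f i h (φ i x) = φ ⟨(i : ℕ) + 1, h⟩ (X.f i h x)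

/-- A family of submodules forming a subrepresentation. -/
def IsSubrep (k : Type u) [Field k] (N : ℕ) (X : QuivRep.{u, v} k N)
    (p : ∀ i, Submodule k (X.V i)) : Prop :=
  ∀ (i : Fin N) (h : (i : ℕ) + 1 < N), ∀ x ∈ p i, X.f i h x ∈ p ⟨(i : ℕ) + 1, h⟩

/-- A quiver representation is indecomposable if it is nonzero and in any
internal direct sum decomposition into two subrepresentations, one summand is
zero. -/
def QuivIndecomposable (k : Type u) [Field k] (N : ℕ) (X : QuivRep.{u, v} k N) : Prop :=
  (∃ i, ∃ x : X.V i, x ≠ 0) ∧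
  ∀ p q : ∀ i, Submodule k (X.V i), IsSubrep k N X p → IsSubrep k N X q →
    (∀ i, IsCompl (p i) (q i)) → (∀ i, p i = ⊥) ∨ (∀ i, q i = ⊥)

/-- The interval representation `[a;b]` (0-based): a copy of `k` at each vertex
`a ≤ j ≤ b`, identity maps between consecutive ones, and `0` elsewhere. -/
noncomputable def IntervalRep (k : Type u) [Field k] (N : ℕ) (a b : ℕ) :
    QuivRep.{u, u} k N where
  V i := ↥(if a ≤ (i : ℕ) ∧ (i : ℕ) ≤ b then (⊤ : Submodule k k) else ⊥)
  f i h := LinearMap.codRestrict _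
    ((if a ≤ (i : ℕ) + 1 ∧ (i : ℕ) + 1 ≤ b then (LinearMap.id : k →ₗ[k] k) else 0).comp
      (Submodule.subtype _))
    (by
      intro x
      by_cases hc : a ≤ (i : ℕ) + 1 ∧ (i : ℕ) + 1 ≤ b <;> simp [hc] <;> split_ifs <;> simp_all)

section Gabriel

open Submodule Set

variable {k : Type u} [Field k] {N : ℕ}

/-- Flag-compatible linearly independent spanning set. -/
lemma flag_basis {V : Type v} [AddCommGroup V] [Module k V]
    (R : ℕ → Submodule k V) (hmono : Monotone R) (m : ℕ) :
    ∃ B : Set V, B ⊆ ↑(R m) ∧ LinearIndependent k ((↑) : B → V) ∧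
      ∀ j ≤ m, R j ≤ Submodule.span k (B ∩ ↑(R j)) := by
  induction m with
  | zero =>
    obtain ⟨B, hBsub, hBspan, hBli⟩ := exists_linearIndependent k (↑(R 0) : Set V)
    refine ⟨B, hBsub, hBli, ?_⟩
    intro j hj
    interval_cases j
    rw [Set.inter_eq_self_of_subset_left hBsub, hBspan]
    intro x hx
    exact Submodule.subset_span hx
  | succ m ih =>
    obtain ⟨B, hBsub, hBli, hBcomp⟩ := ih
    obtain ⟨B', hB'sub, hBB', hspan, hB'li⟩ :=
      exists_linearIndepOn_id_extension hBli (hBsub.trans (hmono (Nat.le_succ m)))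
    refine ⟨B', hB'sub, hB'li, ?_⟩
    intro j hj
    rcases Nat.le_succ_iff_eq_or_le.mp hj with hj' | hj'
    · subst hj'
      rw [Set.inter_eq_self_of_subset_left hB'sub]
      exact fun x hx => hspan hx
    · exact (hBcomp j hj').trans
        (Submodule.span_mono (Set.inter_subset_inter_left _ hBB'))

/-- If a family becomes linearly independent after applying `F`, its span is disjoint
from the kernel of `F`. -/
lemma disjoint_span_ker {V : Type v} [AddCommGroup V] [Module k V]
    {W : Type w} [AddCommGroup W] [Module k W] {ι : Type*}
    (F : V →ₗ[k] W) (p : ι → V) (h : LinearIndependent k (F ∘ p)) :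
    Disjoint (Submodule.span k (Set.range p)) (LinearMap.ker F) := by
  rw [Submodule.disjoint_def]
  intro x hx hker
  obtain ⟨c, hc⟩ := Finsupp.mem_span_range_iff_exists_finsupp.mp hx
  have h0 : Finsupp.linearCombination k (F ∘ p) c = 0 := by
    rw [Finsupp.linearCombination_apply]
    have : F x = 0 := hker
    rw [← this, ← hc, map_finsuppSum]
    simp [Finsupp.sum, map_smul]
  have hc0 := linearIndependent_iff.mp h c h0
  rw [← hc, hc0]
  simp

/-- The range of the composite map from vertex `j` to vertex `i`. -/
noncomputable def Rsub (X : QuivRep.{u,v} k N) :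
    (i : ℕ) → (hi : i < N) → ℕ → Submodule k (X.V ⟨i, hi⟩)
  | 0, _, _ => ⊤
  | (i+1), hi, j =>
    if i + 1 ≤ j then ⊤
    else Submodule.map (X.f ⟨i, Nat.lt_of_succ_lt hi⟩ hi) (Rsub X i (Nat.lt_of_succ_lt hi) j)

lemma Rsub_top (X : QuivRep.{u,v} k N) {i : ℕ} (hi : i < N) {j : ℕ} (hij : i ≤ j) :
    Rsub X i hi j = ⊤ := by
  cases i with
  | zero => rfl
  | succ i => rw [Rsub, if_pos hij]

lemma Rsub_succ (X : QuivRep.{u,v} k N) {i : ℕ} (hi : i + 1 < N) {j : ℕ} (hij : j ≤ i) :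
    Rsub X (i+1) hi j
      = Submodule.map (X.f ⟨i, Nat.lt_of_succ_lt hi⟩ hi) (Rsub X i (Nat.lt_of_succ_lt hi) j) := by
  rw [Rsub, if_neg (by omega)]

lemma Rsub_mono (X : QuivRep.{u,v} k N) {i : ℕ} (hi : i < N) : Monotone (Rsub X i hi) := by
  induction i with
  | zero => intro a b _; exact le_rfl
  | succ i ih =>
    intro a b hab
    by_cases hb : i + 1 ≤ b
    · rw [Rsub_top X hi hb]; exact le_top
    · rw [Rsub_succ X hi (by omega), Rsub_succ X hi (by omega)]
      exact Submodule.map_mono (ih _ hab)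

lemma Rsub_range (X : QuivRep.{u,v} k N) {i : ℕ} (hi : i + 1 < N) :
    Rsub X (i+1) hi i = LinearMap.range (X.f ⟨i, Nat.lt_of_succ_lt hi⟩ hi) := by
  rw [Rsub_succ X hi le_rfl, Rsub_top X _ le_rfl, Submodule.map_top]

/-- A strand decomposition of the part of `X` supported on vertices `≥ i₀`. -/
structure StrandData (X : QuivRep.{u,v} k N) (i₀ : ℕ) where
  Λ : Type v
  a : Λ → ℕ
  b : Λ → ℕ
  w : Λ → ∀ i : Fin N, X.V i
  ha : ∀ s, i₀ ≤ a s
  hab : ∀ s, a s ≤ b s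
  hbN : ∀ s, b s < N
  chain : ∀ s (i : Fin N) (h : (i : ℕ) + 1 < N), a s ≤ (i : ℕ) → (i : ℕ) < b s →
    X.f i h (w s i) = w s ⟨(i : ℕ) + 1, h⟩
  endz : ∀ s (h : b s + 1 < N), X.f ⟨b s, hbN s⟩ h (w s ⟨b s, hbN s⟩) = 0
  indep : ∀ i : Fin N, i₀ ≤ (i : ℕ) →
    LinearIndependent k (fun s : {s : Λ // a s ≤ (i : ℕ) ∧ (i : ℕ) ≤ b s} => w s.1 i)
  spans : ∀ i : Fin N, i₀ ≤ (i : ℕ) → Submodule.span k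
    (Set.range (fun s : {s : Λ // a s ≤ (i : ℕ) ∧ (i : ℕ) ≤ b s} => w s.1 i)) = ⊤
  compat : ∀ (hi : i₀ < N) (j : ℕ), Rsub X i₀ hi j ≤ Submodule.span k
    ((Set.range (fun s : {s : Λ // a s ≤ i₀ ∧ i₀ ≤ b s} => w s.1 ⟨i₀, hi⟩)) ∩ ↑(Rsub X i₀ hi j))

/-- Reconstruction of a compatible generating set at a vertex from one at the next vertex. -/
lemma span_reconstruct {V : Type v} [AddCommGroup V] [Module k V]
    {W : Type w} [AddCommGroup W] [Module k W]
    (F : V →ₗ[k] W) (RA : Submodule k V) (SB : Set W) (T : Set V)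
    (hcompB : Submodule.map F RA ≤ Submodule.span k SB)
    (hlift : ∀ u ∈ SB, ∃ y ∈ T ∩ ↑RA, F y = u)
    (hker : RA ⊓ LinearMap.ker F ≤ Submodule.span k (T ∩ ↑RA)) :
    RA ≤ Submodule.span k (T ∩ ↑RA) := by
  intro x hx
  have hMle : Submodule.span k (T ∩ ↑RA) ≤ RA :=
    Submodule.span_le.mpr Set.inter_subset_right
  have h2 : F x ∈ Submodule.span k SB := hcompB (Submodule.mem_map_of_mem hx)
  have h3 : Submodule.span k SB ≤ Submodule.map F (Submodule.span k (T ∩ ↑RA)) := by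
    refine Submodule.span_le.mpr fun u hu => ?_
    obtain ⟨y, hyT, hyF⟩ := hlift u hu
    exact Submodule.mem_map.mpr ⟨y, Submodule.subset_span hyT, hyF⟩
  obtain ⟨y, hyM, hy⟩ := Submodule.mem_map.mp (h3 h2)
  have hxy : x - y ∈ RA ⊓ LinearMap.ker F := by
    refine ⟨sub_mem hx (hMle hyM), LinearMap.mem_ker.mpr ?_⟩
    rw [map_sub, hy, sub_self]
  have h4 := hker hxy
  have h5 := Submodule.add_mem _ hyM h4
  have : y + (x - y) = x := by abel
  rwa [this] at h5
lemma strand_base (X : QuivRep.{u,v} k N) {i₀ : ℕ} (h : N ≤ i₀) :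
    Nonempty (StrandData X i₀) := by
  refine ⟨⟨PEmpty.{v+1}, fun s => s.elim, fun s => s.elim, fun s => s.elim,
    fun s => s.elim, fun s => s.elim, fun s => s.elim, fun s => s.elim, fun s => s.elim,
    ?_, ?_, ?_⟩⟩
  · intro i hi; exact absurd (lt_of_le_of_lt (h.trans hi) i.2) (lt_irrefl _)
  · intro i hi; exact absurd (lt_of_le_of_lt (h.trans hi) i.2) (lt_irrefl _)
  · intro hi; exact absurd (lt_of_le_of_lt h hi) (lt_irrefl _)
lemma strand_last (X : QuivRep.{u,v} k N) {i₀ : ℕ} (hlast : i₀ + 1 = N) :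
    Nonempty (StrandData X i₀) := by
  have hA : i₀ < N := by omega
  obtain ⟨B, hBsub, hBli, hBcomp⟩ := flag_basis (Rsub X i₀ hA) (Rsub_mono X hA) i₀
  have hspanB : (⊤ : Submodule k (X.V ⟨i₀, hA⟩)) ≤ Submodule.span k B := by
    have := hBcomp i₀ le_rfl
    rw [Rsub_top X hA le_rfl] at this
    exact this.trans (Submodule.span_mono (Set.inter_subset_left))
  refine ⟨⟨↥B, fun _ => i₀, fun _ => i₀,
    fun u => Function.update (fun i => (0 : X.V i)) ⟨i₀, hA⟩ u.1,
    fun _ => le_rfl, fun _ => le_rfl, fun _ => hA, ?_, ?_, ?_, ?_, ?_⟩⟩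
  · intro s i h h1 h2; omega
  · intro s h; omega
  · -- indep
    intro i hile
    have : i = ⟨i₀, hA⟩ := Fin.ext (show (i : ℕ) = i₀ by omega)
    subst this
    have heq : (fun s : {u : ↥B // (fun _ => i₀) u ≤ i₀ ∧ i₀ ≤ (fun _ => i₀) u} =>
        Function.update (fun i => (0 : X.V i)) ⟨i₀, hA⟩ s.1.1 ⟨i₀, hA⟩)
        = (fun u : ↥B => (u : X.V ⟨i₀, hA⟩)) ∘ (fun s => s.1) := by
      funext s
      simp
    exact heq ▸ hBli.comp _ (fun s t hst => Subtype.ext hst)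
  · -- spans
    intro i hile
    have : i = ⟨i₀, hA⟩ := Fin.ext (show (i : ℕ) = i₀ by omega)
    subst this
    have hrange : Set.range (fun s : {u : ↥B // (fun _ => i₀) u ≤ i₀ ∧ i₀ ≤ (fun _ => i₀) u} =>
        Function.update (fun i => (0 : X.V i)) ⟨i₀, hA⟩ s.1.1 ⟨i₀, hA⟩) = B := by
      ext u
      constructor
      · rintro ⟨s, rfl⟩; simp [s.1.2]
      · intro hu; exact ⟨⟨⟨u, hu⟩, le_rfl, le_rfl⟩, by simp⟩
    rw [hrange]
    exact top_le_iff.mp hspanB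
  · -- compat
    intro hi j
    have hrange : Set.range (fun s : {u : ↥B // (fun _ => i₀) u ≤ i₀ ∧ i₀ ≤ (fun _ => i₀) u} =>
        Function.update (fun i => (0 : X.V i)) ⟨i₀, hA⟩ s.1.1 ⟨i₀, hi⟩) = B := by
      ext u
      constructor
      · rintro ⟨s, rfl⟩; simp [s.1.2]
      · intro hu; exact ⟨⟨⟨u, hu⟩, le_rfl, le_rfl⟩, by simp⟩
    rw [hrange]
    rcases le_total j i₀ with hj | hj
    · exact hBcomp j hj
    · rw [Rsub_top X hi hj]
      simpa using hspanB
lemma strand_step (X : QuivRep.{u,v} k N) {i₀ : ℕ} (hB : i₀ + 1 < N)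
    (D : StrandData X (i₀ + 1)) : Nonempty (StrandData X i₀) := by
  classical
  have hA : i₀ < N := by omega
  set F : X.V ⟨i₀, hA⟩ →ₗ[k] X.V ⟨i₀ + 1, hB⟩ := X.f ⟨i₀, hA⟩ hB with hFdef
  set E : Set D.Λ :=
    {s | D.a s = i₀ + 1 ∧ D.w s ⟨i₀ + 1, hB⟩ ∈ LinearMap.range F} with hEdef
  -- minimal flag index of the strand value, and a compatible preimage
  have hex : ∀ s : {s // s ∈ E}, ∃ j, D.w s.1 ⟨i₀ + 1, hB⟩ ∈ Rsub X (i₀ + 1) hB j :=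
    fun s => ⟨i₀ + 1, by rw [Rsub_top X hB le_rfl]; trivial⟩
  have hrangeF : Rsub X (i₀ + 1) hB i₀ = LinearMap.range F := Rsub_range X hB
  have hjle : ∀ s : {s // s ∈ E}, Nat.find (hex s) ≤ i₀ :=
    fun s => Nat.find_min' (hex s) (by rw [hrangeF]; exact s.2.2)
  have hpre : ∀ s : {s // s ∈ E}, ∃ x, x ∈ Rsub X i₀ hA (Nat.find (hex s)) ∧
      F x = D.w s.1 ⟨i₀ + 1, hB⟩ := by
    intro s
    have := Nat.find_spec (hex s)
    rw [Rsub_succ X hB (hjle s)] at this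
    obtain ⟨x, hx1, hx2⟩ := this
    exact ⟨x, hx1, hx2⟩
  choose p hp1 hp2 using hpre
  have hkey : ∀ (s : {s // s ∈ E}) (j : ℕ), D.w s.1 ⟨i₀ + 1, hB⟩ ∈ Rsub X (i₀ + 1) hB j →
      p s ∈ Rsub X i₀ hA j :=
    fun s j hj => Rsub_mono X hA (Nat.find_min' (hex s) hj) (hp1 s)
  -- kernel basis compatible with the flag
  obtain ⟨K, hKsub, hKli, hKcomp⟩ := flag_basis
    (fun j => Rsub X i₀ hA j ⊓ LinearMap.ker F)
    (fun j j' hj => inf_le_inf_right _ (Rsub_mono X hA hj)) i₀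
  have hKker : ∀ u ∈ K, F u = 0 := by
    intro u hu
    have := hKsub hu
    rw [Rsub_top X hA le_rfl, top_inf_eq] at this
    exact this
  have hcomp : ∀ j ≤ i₀, Rsub X i₀ hA j ≤ Submodule.span k
      ((Set.range (fun s' : {s' : D.Λ ⊕ ↥K //
          Sum.elim (fun s => if s ∈ E then i₀ else D.a s) (fun _ => i₀) s' ≤ i₀ ∧
          i₀ ≤ Sum.elim D.b (fun _ => i₀) s'} =>
        Sum.elim
          (fun s => if h : s ∈ E then Function.update (D.w s) ⟨i₀, hA⟩ (p ⟨s, h⟩) else D.w s)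
          (fun u => Function.update (fun i => (0 : X.V i)) ⟨i₀, hA⟩ u.1) s'.1 ⟨i₀, hA⟩))
        ∩ ↑(Rsub X i₀ hA j)) := by
    intro j hj
    refine span_reconstruct F (Rsub X i₀ hA j)
      ((Set.range (fun s : {s : D.Λ // D.a s ≤ i₀ + 1 ∧ i₀ + 1 ≤ D.b s} =>
        D.w s.1 ⟨i₀ + 1, hB⟩)) ∩ ↑(Rsub X (i₀ + 1) hB j)) _ ?_ ?_ ?_
    · have heq : Submodule.map F (Rsub X i₀ hA j) = Rsub X (i₀ + 1) hB j :=
        (Rsub_succ X hB hj).symm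
      rw [heq]
      exact D.compat hB j
    · rintro u ⟨⟨s, rfl⟩, hu⟩
      have huR : D.w s.1 ⟨i₀ + 1, hB⟩ ∈ Rsub X (i₀ + 1) hB j := hu
      have hsE : s.1 ∈ E := by
        refine ⟨le_antisymm s.2.1 (D.ha s.1), ?_⟩
        rw [← hrangeF]
        exact Rsub_mono X hB hj huR
      refine ⟨p ⟨s.1, hsE⟩, ⟨⟨⟨Sum.inl s.1, ?_, ?_⟩, ?_⟩, hkey ⟨s.1, hsE⟩ j hu⟩,
        hp2 ⟨s.1, hsE⟩⟩
      · simp only [Sum.elim_inl, if_pos hsE]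
        exact le_rfl
      · simp only [Sum.elim_inl]
        have := (D.ha s.1).trans (D.hab s.1)
        omega
      · simp only [Sum.elim_inl, dif_pos hsE, Function.update_self]
    · refine le_trans (hKcomp j hj) (Submodule.span_mono ?_)
      rintro u ⟨huK, huR⟩
      refine ⟨⟨⟨Sum.inr ⟨u, huK⟩, le_rfl, le_rfl⟩, ?_⟩, (Submodule.mem_inf.mp huR).1⟩
      simp only [Sum.elim_inr, Function.update_self]
  -- the new strand data
  refine ⟨⟨D.Λ ⊕ ↥K,
    Sum.elim (fun s => if s ∈ E then i₀ else D.a s) (fun _ => i₀),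
    Sum.elim D.b (fun _ => i₀),
    Sum.elim
      (fun s => if h : s ∈ E then Function.update (D.w s) ⟨i₀, hA⟩ (p ⟨s, h⟩) else D.w s)
      (fun u => Function.update (fun i => (0 : X.V i)) ⟨i₀, hA⟩ u.1),
    ?_, ?_, ?_, ?_, ?_, ?_, ?_, ?_⟩⟩
  · rintro (s | u)
    · dsimp only [Sum.elim_inl]
      split
      · exact le_rfl
      · exact le_trans (Nat.le_succ i₀) (D.ha s)
    · exact le_rfl
  · rintro (s | u)
    · dsimp only [Sum.elim_inl, Sum.elim_inr]
      split
      · exact le_trans (Nat.le_succ i₀) (le_trans (le_of_eq rfl) ((D.ha s).trans (D.hab s)))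
      · exact D.hab s
    · exact le_rfl
  · rintro (s | u)
    · exact D.hbN s
    · exact hA
  · -- chain
    rintro (s | u) i h h1 h2
    · dsimp only [Sum.elim_inl] at h1 h2 ⊢
      by_cases hiA : (i : ℕ) = i₀
      · have hi' : i = ⟨i₀, hA⟩ := Fin.ext hiA
        subst hi'
        have hsE : s ∈ E := by
          by_contra hc
          rw [if_neg hc] at h1
          have := D.ha s
          omega
        rw [dif_pos hsE, Function.update_self]
        have hne : (⟨i₀ + 1, h⟩ : Fin N) ≠ ⟨i₀, hA⟩ := by
          intro hcon
          have := congrArg Fin.val hcon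
          simp at this
        rw [Function.update_of_ne hne]
        exact hp2 ⟨s, hsE⟩
      · have hge : i₀ + 1 ≤ (i : ℕ) := by
          rcases lt_or_ge (i : ℕ) i₀ with hlt | hge'
          · exfalso
            split at h1
            · omega
            · have := D.ha s; omega
          · omega
        have has : D.a s ≤ (i : ℕ) := by
          split at h1
          · exact le_trans (le_of_eq (by exact (‹s ∈ E›).1)) hge
          · exact h1
        have hne1 : i ≠ (⟨i₀, hA⟩ : Fin N) := fun hc => hiA (congrArg Fin.val hc)
        have hne2 : (⟨(i : ℕ) + 1, h⟩ : Fin N) ≠ ⟨i₀, hA⟩ := by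
          intro hcon
          have := congrArg Fin.val hcon
          simp at this
          omega
        split
        · rw [Function.update_of_ne hne1, Function.update_of_ne hne2]
          exact D.chain s i h has h2
        · exact D.chain s i h has h2
    · dsimp only [Sum.elim_inl, Sum.elim_inr] at h1 h2
      omega
  · -- endz
    rintro (s | u) h
    · dsimp only [Sum.elim_inl] at h ⊢
      have hne : (⟨D.b s, D.hbN s⟩ : Fin N) ≠ ⟨i₀, hA⟩ := by
        intro hcon
        have := congrArg Fin.val hcon
        have h1 := (D.ha s).trans (D.hab s)
        simp at this
        omega
      split
      · rw [Function.update_of_ne hne]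
        exact D.endz s h
      · exact D.endz s h
    · dsimp only [Sum.elim_inr] at h ⊢
      rw [Function.update_self]
      exact hKker u.1 u.2
  · -- indep
    intro i hile
    by_cases hiA : (i : ℕ) = i₀
    · have hieq : i = ⟨i₀, hA⟩ := Fin.ext hiA
      subst hieq
      -- the combined family at vertex i₀
      have hEact : ∀ s : {s // s ∈ E},
          (Sum.elim (fun s => if s ∈ E then i₀ else D.a s) (fun _ : ↥K => i₀) (Sum.inl s.1) ≤ i₀ ∧
            i₀ ≤ Sum.elim D.b (fun _ : ↥K => i₀) (Sum.inl s.1)) := by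
        intro s
        constructor
        · simp only [Sum.elim_inl, if_pos s.2]
          exact le_rfl
        · simp only [Sum.elim_inl]
          have h1 := (D.ha s.1).trans (D.hab s.1)
          omega
      set G : ({s // s ∈ E} ⊕ ↥K) →
          {s' : D.Λ ⊕ ↥K //
            Sum.elim (fun s => if s ∈ E then i₀ else D.a s) (fun _ => i₀) s' ≤ i₀ ∧
            i₀ ≤ Sum.elim D.b (fun _ => i₀) s'} :=
        Sum.elim (fun s => ⟨Sum.inl s.1, hEact s⟩) (fun u => ⟨Sum.inr u, le_rfl, le_rfl⟩)
        with hG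
      have hGinj : Function.Injective G := by
        rintro (s | u) (t | v) h
        · simp only [hG, Sum.elim_inl, Subtype.mk.injEq] at h
          exact congrArg Sum.inl (Subtype.ext (Sum.inl_injective h))
        · simp only [hG, Sum.elim_inl, Sum.elim_inr, Subtype.mk.injEq] at h
          simp at h
        · simp only [hG, Sum.elim_inl, Sum.elim_inr, Subtype.mk.injEq] at h
          simp at h
        · simp only [hG, Sum.elim_inr, Subtype.mk.injEq] at h
          exact congrArg Sum.inr (Sum.inr_injective h)
      have hGsurj : Function.Surjective G := by
        rintro ⟨s | u, hs1, hs2⟩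
        · have hsE : s ∈ E := by
            by_contra hc
            simp only [Sum.elim_inl, if_neg hc] at hs1
            have := D.ha s
            omega
          exact ⟨Sum.inl ⟨s, hsE⟩, Subtype.ext rfl⟩
        · exact ⟨Sum.inr u, Subtype.ext rfl⟩
      have hsprop : ∀ s : {s // s ∈ E}, D.a s.1 ≤ i₀ + 1 ∧ i₀ + 1 ≤ D.b s.1 := by
        intro s
        have h1 : D.a s.1 = i₀ + 1 := s.2.1
        have h2 := D.hab s.1
        omega
      have hWli : LinearIndependent k (fun s : {s // s ∈ E} => D.w s.1 ⟨i₀ + 1, hB⟩) := by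
        refine (D.indep ⟨i₀ + 1, hB⟩ le_rfl).comp
          (fun s => ⟨s.1, hsprop s⟩) ?_
        intro x y h
        simp only [Subtype.mk.injEq] at h
        exact Subtype.ext h
      have hFp : (⇑F ∘ fun s : {s // s ∈ E} => p s) = fun s => D.w s.1 ⟨i₀ + 1, hB⟩ :=
        funext fun s => hp2 s
      have hpli : LinearIndependent k (fun s : {s // s ∈ E} => p s) :=
        LinearIndependent.of_comp F (hFp.symm ▸ hWli)
      have hdisj : Disjoint
          (Submodule.span k (Set.range (fun s : {s // s ∈ E} => p s)))
          (Submodule.span k (Set.range (Subtype.val : ↥K → X.V ⟨i₀, hA⟩))) := by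
        have h1 := disjoint_span_ker F (fun s : {s // s ∈ E} => p s) (hFp.symm ▸ hWli)
        refine h1.mono_right ?_
        rw [Subtype.range_coe]
        refine Submodule.span_le.mpr ?_
        intro u hu
        exact LinearMap.mem_ker.mpr (hKker u hu)
      have hsum := hpli.sum_type hKli hdisj
      have hfe : (fun s' : {s' : D.Λ ⊕ ↥K //
            Sum.elim (fun s => if s ∈ E then i₀ else D.a s) (fun _ => i₀) s' ≤ i₀ ∧
            i₀ ≤ Sum.elim D.b (fun _ => i₀) s'} =>
          Sum.elim
            (fun s => if h : s ∈ E then Function.update (D.w s) ⟨i₀, hA⟩ (p ⟨s, h⟩) else D.w s)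
            (fun u => Function.update (fun i => (0 : X.V i)) ⟨i₀, hA⟩ u.1) s'.1 ⟨i₀, hA⟩)
          ∘ G = Sum.elim (fun s : {s // s ∈ E} => p s) (Subtype.val : ↥K → _) := by
        funext x
        rcases x with s | u
        · simp only [Function.comp_apply, hG, Sum.elim_inl, dif_pos s.2, Function.update_self]
        · simp only [Function.comp_apply, hG, Sum.elim_inl, Sum.elim_inr, Function.update_self]
      exact (linearIndependent_equiv (Equiv.ofBijective G ⟨hGinj, hGsurj⟩)).mp (hfe ▸ hsum)
    · -- vertex above i₀
      have hge : i₀ + 1 ≤ (i : ℕ) := by omega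
      have hEact2 : ∀ s : {s : D.Λ // D.a s ≤ (i : ℕ) ∧ (i : ℕ) ≤ D.b s},
          (Sum.elim (fun s => if s ∈ E then i₀ else D.a s) (fun _ : ↥K => i₀) (Sum.inl s.1)
              ≤ (i : ℕ) ∧
            (i : ℕ) ≤ Sum.elim D.b (fun _ : ↥K => i₀) (Sum.inl s.1)) := by
        intro s
        refine ⟨?_, s.2.2⟩
        simp only [Sum.elim_inl]
        split
        · omega
        · exact s.2.1
      set G2 : {s : D.Λ // D.a s ≤ (i : ℕ) ∧ (i : ℕ) ≤ D.b s} →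
          {s' : D.Λ ⊕ ↥K //
            Sum.elim (fun s => if s ∈ E then i₀ else D.a s) (fun _ => i₀) s' ≤ (i : ℕ) ∧
            (i : ℕ) ≤ Sum.elim D.b (fun _ => i₀) s'} :=
        fun s => ⟨Sum.inl s.1, hEact2 s⟩ with hG2
      have hG2inj : Function.Injective G2 := by
        intro x y h
        simp only [hG2, Subtype.mk.injEq, Sum.inl.injEq] at h
        exact Subtype.ext h
      have hG2surj : Function.Surjective G2 := by
        rintro ⟨s | u, hs1, hs2⟩
        · simp only [Sum.elim_inl] at hs1 hs2
          have has : D.a s ≤ (i : ℕ) := by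
            split at hs1
            · have := (‹s ∈ E›).1
              omega
            · exact hs1
          exact ⟨⟨s, has, hs2⟩, Subtype.ext rfl⟩
        · simp only [Sum.elim_inr] at hs2
          omega
      have hfe2 : (fun s' : {s' : D.Λ ⊕ ↥K //
            Sum.elim (fun s => if s ∈ E then i₀ else D.a s) (fun _ => i₀) s' ≤ (i : ℕ) ∧
            (i : ℕ) ≤ Sum.elim D.b (fun _ => i₀) s'} =>
          Sum.elim
            (fun s => if h : s ∈ E then Function.update (D.w s) ⟨i₀, hA⟩ (p ⟨s, h⟩) else D.w s)
            (fun u => Function.update (fun i => (0 : X.V i)) ⟨i₀, hA⟩ u.1) s'.1 i)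
          ∘ G2 = fun s : {s : D.Λ // D.a s ≤ (i : ℕ) ∧ (i : ℕ) ≤ D.b s} => D.w s.1 i := by
        funext s
        have hne : i ≠ (⟨i₀, hA⟩ : Fin N) := fun hc => hiA (congrArg Fin.val hc)
        simp only [Function.comp_apply, hG2, Sum.elim_inl]
        split
        · rw [Function.update_of_ne hne]
        · rfl
      exact (linearIndependent_equiv (Equiv.ofBijective G2 ⟨hG2inj, hG2surj⟩)).mp
        (hfe2 ▸ D.indep i hge)
  · -- spans
    intro i hile
    by_cases hiA : (i : ℕ) = i₀
    · have hieq : i = ⟨i₀, hA⟩ := Fin.ext hiA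
      subst hieq
      have h := hcomp i₀ le_rfl
      rw [Rsub_top X hA le_rfl] at h
      rw [eq_top_iff]
      exact le_trans h (Submodule.span_mono Set.inter_subset_left)
    · have hge : i₀ + 1 ≤ (i : ℕ) := by omega
      have hEact2 : ∀ s : {s : D.Λ // D.a s ≤ (i : ℕ) ∧ (i : ℕ) ≤ D.b s},
          (Sum.elim (fun s => if s ∈ E then i₀ else D.a s) (fun _ : ↥K => i₀) (Sum.inl s.1)
              ≤ (i : ℕ) ∧
            (i : ℕ) ≤ Sum.elim D.b (fun _ : ↥K => i₀) (Sum.inl s.1)) := by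
        intro s
        refine ⟨?_, s.2.2⟩
        simp only [Sum.elim_inl]
        split
        · omega
        · exact s.2.1
      set G2 : {s : D.Λ // D.a s ≤ (i : ℕ) ∧ (i : ℕ) ≤ D.b s} →
          {s' : D.Λ ⊕ ↥K //
            Sum.elim (fun s => if s ∈ E then i₀ else D.a s) (fun _ => i₀) s' ≤ (i : ℕ) ∧
            (i : ℕ) ≤ Sum.elim D.b (fun _ => i₀) s'} :=
        fun s => ⟨Sum.inl s.1, hEact2 s⟩ with hG2
      have hG2surj : Function.Surjective G2 := by
        rintro ⟨s | u, hs1, hs2⟩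
        · simp only [Sum.elim_inl] at hs1 hs2
          have has : D.a s ≤ (i : ℕ) := by
            split at hs1
            · have := (‹s ∈ E›).1
              omega
            · exact hs1
          exact ⟨⟨s, has, hs2⟩, Subtype.ext rfl⟩
        · simp only [Sum.elim_inr] at hs2
          omega
      have hfe2 : (fun s' : {s' : D.Λ ⊕ ↥K //
            Sum.elim (fun s => if s ∈ E then i₀ else D.a s) (fun _ => i₀) s' ≤ (i : ℕ) ∧
            (i : ℕ) ≤ Sum.elim D.b (fun _ => i₀) s'} =>
          Sum.elim
            (fun s => if h : s ∈ E then Function.update (D.w s) ⟨i₀, hA⟩ (p ⟨s, h⟩) else D.w s)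
            (fun u => Function.update (fun i => (0 : X.V i)) ⟨i₀, hA⟩ u.1) s'.1 i)
          ∘ G2 = fun s : {s : D.Λ // D.a s ≤ (i : ℕ) ∧ (i : ℕ) ≤ D.b s} => D.w s.1 i := by
        funext s
        have hne : i ≠ (⟨i₀, hA⟩ : Fin N) := fun hc => hiA (congrArg Fin.val hc)
        simp only [Function.comp_apply, hG2, Sum.elim_inl]
        split
        · rw [Function.update_of_ne hne]
        · rfl
      rw [← hG2surj.range_comp _, hfe2]
      exact D.spans i hge
  · -- compat
    intro hi j
    rcases le_total j i₀ with hj | hj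
    · exact hcomp j hj
    · have h := hcomp i₀ le_rfl
      rw [Rsub_top X hA le_rfl] at h
      rw [Rsub_top X hi hj]
      exact h
lemma strand_exists (X : QuivRep.{u,v} k N) : Nonempty (StrandData X 0) := by
  suffices h : ∀ d i₀, N ≤ i₀ + d → Nonempty (StrandData X i₀) from h N 0 (by omega)
  intro d
  induction d with
  | zero => exact fun i₀ h => strand_base X (by omega)
  | succ d ih =>
    intro i₀ h
    by_cases hc : N ≤ i₀ + d
    · exact ih i₀ hc
    · by_cases h2 : i₀ + 1 = N
      · exact strand_last X h2
      · have hB : i₀ + 1 < N := by omega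
        obtain ⟨D⟩ := ih (i₀ + 1) (by omega)
        exact strand_step X hB D

/-- A linear equivalence from a one-dimensional space to the `⊤`-if branch. -/
noncomputable def oneDimEquiv {V : Type*} [AddCommGroup V] [Module k V] {ι : Type*} [Unique ι]
    (v : ι → V) (hli : LinearIndependent k v) (hsp : Submodule.span k (Set.range v) = ⊤)
    (P : Prop) [Decidable P] (hP : P) :
    V ≃ₗ[k] ↥(if P then (⊤ : Submodule k k) else ⊥) :=
  (Module.Basis.mk hli hsp.ge).repr ≪≫ₗ Finsupp.LinearEquiv.finsuppUnique k k ι ≪≫ₗ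
    Submodule.topEquiv.symm ≪≫ₗ LinearEquiv.ofEq _ _ (if_pos hP).symm

lemma oneDimEquiv_val {V : Type*} [AddCommGroup V] [Module k V] {ι : Type*} [Unique ι]
    (v : ι → V) (hli : LinearIndependent k v) (hsp : Submodule.span k (Set.range v) = ⊤)
    (P : Prop) [Decidable P] (hP : P) :
    ((oneDimEquiv v hli hsp P hP (v default) : ↥(if P then (⊤ : Submodule k k) else ⊥)) : k)
      = 1 := by
  have h1 : v default = (Module.Basis.mk hli hsp.ge) default := (Module.Basis.mk_apply hli hsp.ge default).symm
  rw [oneDimEquiv]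
  simp only [LinearEquiv.trans_apply, h1, Module.Basis.repr_self]
  simp [Finsupp.LinearEquiv.finsuppUnique_apply]

/-- Any two subsingleton modules are equivalent. -/
noncomputable def subsingletonEquiv (V W : Type*) [AddCommGroup V] [Module k V]
    [AddCommGroup W] [Module k W] [Subsingleton V] [Subsingleton W] : V ≃ₗ[k] W :=
  LinearEquiv.ofLinear 0 0 (LinearMap.ext fun x => Subsingleton.elim _ _)
    (LinearMap.ext fun x => Subsingleton.elim _ _)

lemma interval_subsingleton {P : Prop} [Decidable P] (hP : ¬P) :
    Subsingleton ↥(if P then (⊤ : Submodule k k) else ⊥) := by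
  rw [if_neg hP]
  infer_instance

lemma IntervalRep_f_val (a b : ℕ) (i : Fin N) (h : (i : ℕ) + 1 < N)
    (x : (IntervalRep k N a b).V i) :
    ((((IntervalRep k N a b).f i h) x)).1
      = if a ≤ (i : ℕ) + 1 ∧ (i : ℕ) + 1 ≤ b then x.1 else 0 := by
  by_cases hc : a ≤ (i : ℕ) + 1 ∧ (i : ℕ) + 1 ≤ b
  · simp only [IntervalRep, LinearMap.codRestrict_apply, LinearMap.comp_apply, if_pos hc,
      LinearMap.id_apply, Submodule.coe_subtype]
    rfl
  · simp only [IntervalRep, LinearMap.codRestrict_apply, LinearMap.comp_apply, if_neg hc,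
      LinearMap.zero_apply]
    rfl
lemma part2_main (X : QuivRep.{u,v} k N) (hX : QuivIndecomposable k N X) :
    ∃ a b : ℕ, a ≤ b ∧ b < N ∧ Nonempty (QuivIso k N X (IntervalRep k N a b)) := by
  classical
  obtain ⟨SD⟩ := strand_exists X
  -- the subrepresentation spanned by a set of strands
  have hsub : ∀ T : Set SD.Λ, IsSubrep k N X (fun i => Submodule.span k
      ((fun s : {s : SD.Λ // SD.a s ≤ (i : ℕ) ∧ (i : ℕ) ≤ SD.b s} => SD.w s.1 i) ''
        {x | x.1 ∈ T})) := by
    intro T i h x hx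
    have hmap : Submodule.map (X.f i h) (Submodule.span k
        ((fun s : {s : SD.Λ // SD.a s ≤ (i : ℕ) ∧ (i : ℕ) ≤ SD.b s} => SD.w s.1 i) ''
          {x | x.1 ∈ T}))
        ≤ Submodule.span k
        ((fun s : {s : SD.Λ // SD.a s ≤ (i : ℕ) + 1 ∧ (i : ℕ) + 1 ≤ SD.b s} =>
            SD.w s.1 ⟨(i : ℕ) + 1, h⟩) '' {x | x.1 ∈ T}) := by
      rw [Submodule.map_span]
      refine Submodule.span_le.mpr ?_
      rintro y ⟨u, ⟨⟨s, hs1, hs2⟩, hsxT, rfl⟩, rfl⟩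
      by_cases hlt : (i : ℕ) < SD.b s
      · rw [SD.chain s i h hs1 hlt]
        exact Submodule.subset_span
          ⟨⟨s, le_trans hs1 (Nat.le_succ _), hlt⟩, hsxT, rfl⟩
      · have hib : (i : ℕ) = SD.b s := le_antisymm hs2 (not_lt.mp hlt)
        have hz : ∀ (j : Fin N) (hj : (j : ℕ) + 1 < N), (j : ℕ) = SD.b s →
            X.f j hj (SD.w s j) = 0 := by
          intro j hj hjb
          have hje : j = ⟨SD.b s, SD.hbN s⟩ := Fin.ext hjb
          subst hje
          exact SD.endz s hj
        have hmem0 : X.f i h (SD.w s i) ∈ Submodule.span k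
            ((fun t : {t : SD.Λ // SD.a t ≤ (i : ℕ) + 1 ∧ (i : ℕ) + 1 ≤ SD.b t} =>
              SD.w t.1 ⟨(i : ℕ) + 1, h⟩) '' {x | x.1 ∈ T}) := by
          rw [hz i h hib]
          exact Submodule.zero_mem _
        exact hmem0
    exact hmap (Submodule.mem_map_of_mem hx)
  -- complementarity
  have hcompl : ∀ (T : Set SD.Λ) (i : Fin N), IsCompl
      (Submodule.span k
        ((fun s : {s : SD.Λ // SD.a s ≤ (i : ℕ) ∧ (i : ℕ) ≤ SD.b s} => SD.w s.1 i) ''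
          {x | x.1 ∈ T}))
      (Submodule.span k
        ((fun s : {s : SD.Λ // SD.a s ≤ (i : ℕ) ∧ (i : ℕ) ≤ SD.b s} => SD.w s.1 i) ''
          {x | x.1 ∈ Tᶜ})) := by
    intro T i
    constructor
    · refine (SD.indep i (Nat.zero_le _)).disjoint_span_image ?_
      rw [Set.disjoint_left]
      intro x hx hx'
      exact hx' hx
    · rw [codisjoint_iff, ← Submodule.span_union, ← Set.image_union]
      have huniv : ({x : {s : SD.Λ // SD.a s ≤ (i : ℕ) ∧ (i : ℕ) ≤ SD.b s} | x.1 ∈ T}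
          ∪ {x | x.1 ∈ Tᶜ}) = Set.univ := by
        ext x
        by_cases hx : x.1 ∈ T <;> simp [hx]
      rw [huniv, Set.image_univ, SD.spans i (Nat.zero_le _)]
  -- there is an active strand
  obtain ⟨i0, x0, hx0⟩ := hX.1
  have hactive : ∃ s : SD.Λ, SD.a s ≤ (i0 : ℕ) ∧ (i0 : ℕ) ≤ SD.b s := by
    by_contra hno
    haveI : IsEmpty {s : SD.Λ // SD.a s ≤ (i0 : ℕ) ∧ (i0 : ℕ) ≤ SD.b s} :=
      ⟨fun s => hno ⟨s.1, s.2⟩⟩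
    have hsp := SD.spans i0 (Nat.zero_le _)
    rw [Set.range_eq_empty, Submodule.span_empty] at hsp
    refine hx0 ?_
    have : x0 ∈ (⊥ : Submodule k (X.V i0)) := by rw [hsp]; trivial
    simpa using this
  obtain ⟨s₀, hs₀⟩ := hactive
  -- every strand equals s₀
  have huniq : ∀ s : SD.Λ, s = s₀ := by
    intro s
    by_contra hss
    rcases hX.2
      (fun i => Submodule.span k
        ((fun t : {t : SD.Λ // SD.a t ≤ (i : ℕ) ∧ (i : ℕ) ≤ SD.b t} => SD.w t.1 i) ''
          {x | x.1 ∈ ({s} : Set SD.Λ)}))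
      (fun i => Submodule.span k
        ((fun t : {t : SD.Λ // SD.a t ≤ (i : ℕ) ∧ (i : ℕ) ≤ SD.b t} => SD.w t.1 i) ''
          {x | x.1 ∈ ({s} : Set SD.Λ)ᶜ}))
      (hsub _) (hsub _) (fun i => hcompl _ i) with hp | hq
    · have hlt : SD.a s < N := lt_of_le_of_lt (SD.hab s) (SD.hbN s)
      have hmem : SD.w s ⟨SD.a s, hlt⟩ ∈ Submodule.span k
          ((fun t : {t : SD.Λ // SD.a t ≤ SD.a s ∧ SD.a s ≤ SD.b t} =>
            SD.w t.1 ⟨SD.a s, hlt⟩) '' {x | x.1 ∈ ({s} : Set SD.Λ)}) :=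
        Submodule.subset_span ⟨⟨s, le_rfl, SD.hab s⟩, rfl, rfl⟩
      rw [hp ⟨SD.a s, hlt⟩] at hmem
      exact (SD.indep ⟨SD.a s, hlt⟩ (Nat.zero_le _)).ne_zero ⟨s, le_rfl, SD.hab s⟩
        (by simpa using hmem)
    · have hlt : SD.a s₀ < N := lt_of_le_of_lt (SD.hab s₀) (SD.hbN s₀)
      have hmem : SD.w s₀ ⟨SD.a s₀, hlt⟩ ∈ Submodule.span k
          ((fun t : {t : SD.Λ // SD.a t ≤ SD.a s₀ ∧ SD.a s₀ ≤ SD.b t} =>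
            SD.w t.1 ⟨SD.a s₀, hlt⟩) '' {x | x.1 ∈ ({s} : Set SD.Λ)ᶜ}) :=
        Submodule.subset_span ⟨⟨s₀, le_rfl, SD.hab s₀⟩, fun hc => hss (hc.symm), rfl⟩
      rw [hq ⟨SD.a s₀, hlt⟩] at hmem
      exact (SD.indep ⟨SD.a s₀, hlt⟩ (Nat.zero_le _)).ne_zero ⟨s₀, le_rfl, SD.hab s₀⟩
        (by simpa using hmem)
  -- out-of-range vertices are trivial
  have hss : ∀ i : Fin N, ¬(SD.a s₀ ≤ (i : ℕ) ∧ (i : ℕ) ≤ SD.b s₀) →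
      ∀ z : X.V i, z = 0 := by
    intro i hout z
    haveI : IsEmpty {s : SD.Λ // SD.a s ≤ (i : ℕ) ∧ (i : ℕ) ≤ SD.b s} :=
      ⟨fun x => hout (huniq x.1 ▸ x.2)⟩
    have hsp := SD.spans i (Nat.zero_le _)
    rw [Set.range_eq_empty, Submodule.span_empty] at hsp
    have : z ∈ (⊥ : Submodule k (X.V i)) := by rw [hsp]; trivial
    simpa using this
  refine ⟨SD.a s₀, SD.b s₀, SD.hab s₀, SD.hbN s₀, ⟨?_⟩⟩
  refine ⟨fun i => if h : SD.a s₀ ≤ (i : ℕ) ∧ (i : ℕ) ≤ SD.b s₀ then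
      (letI : Unique {s : SD.Λ // SD.a s ≤ (i : ℕ) ∧ (i : ℕ) ≤ SD.b s} :=
        ⟨⟨⟨s₀, h⟩⟩, fun x => Subtype.ext (huniq x.1)⟩
       oneDimEquiv (fun s : {s : SD.Λ // SD.a s ≤ (i : ℕ) ∧ (i : ℕ) ≤ SD.b s} => SD.w s.1 i)
         (SD.indep i (Nat.zero_le _)) (SD.spans i (Nat.zero_le _)) _ h)
    else
      (haveI : Subsingleton (X.V i) := ⟨fun x y => (hss i h x).trans (hss i h y).symm⟩
       haveI : Subsingleton ((IntervalRep k N (SD.a s₀) (SD.b s₀)).V i) :=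
         interval_subsingleton (k := k) h
       subsingletonEquiv _ _), ?_⟩
  intro i h x
  by_cases hnext : SD.a s₀ ≤ (i : ℕ) + 1 ∧ (i : ℕ) + 1 ≤ SD.b s₀
  · by_cases hcur : SD.a s₀ ≤ (i : ℕ) ∧ (i : ℕ) ≤ SD.b s₀
    · -- both vertices in range
      simp only [dif_pos hcur, dif_pos hnext]
      have hx : x ∈ Submodule.span k (Set.range
          (fun s : {s : SD.Λ // SD.a s ≤ (i : ℕ) ∧ (i : ℕ) ≤ SD.b s} => SD.w s.1 i)) := by
        rw [SD.spans i (Nat.zero_le _)]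
        trivial
      refine Submodule.span_induction ?_ ?_ ?_ ?_ hx
      · rintro u ⟨sx, rfl⟩
        have hsx : sx = ⟨s₀, hcur⟩ := Subtype.ext (huniq sx.1)
        subst hsx
        apply Subtype.ext
        rw [IntervalRep_f_val]
        rw [if_pos hnext]
        letI : Unique {s : SD.Λ // SD.a s ≤ (i : ℕ) ∧ (i : ℕ) ≤ SD.b s} :=
          ⟨⟨⟨s₀, hcur⟩⟩, fun x => Subtype.ext (huniq x.1)⟩
        letI : Unique {s : SD.Λ // SD.a s ≤ (i : ℕ) + 1 ∧ (i : ℕ) + 1 ≤ SD.b s} :=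
          ⟨⟨⟨s₀, hnext⟩⟩, fun x => Subtype.ext (huniq x.1)⟩
        have hval1 := oneDimEquiv_val
          (fun s : {s : SD.Λ // SD.a s ≤ (i : ℕ) ∧ (i : ℕ) ≤ SD.b s} => SD.w s.1 i)
          (SD.indep i (Nat.zero_le _)) (SD.spans i (Nat.zero_le _)) _ hcur
        have hval2 := oneDimEquiv_val
          (fun s : {s : SD.Λ // SD.a s ≤ (i : ℕ) + 1 ∧ (i : ℕ) + 1 ≤ SD.b s} =>
            SD.w s.1 ⟨(i : ℕ) + 1, h⟩)
          (SD.indep ⟨(i : ℕ) + 1, h⟩ (Nat.zero_le _)) (SD.spans ⟨(i : ℕ) + 1, h⟩ (Nat.zero_le _)) _ hnext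
        rw [SD.chain s₀ i h hcur.1 (by omega)]
        erw [dif_pos hcur, dif_pos hnext]
        exact hval1.trans hval2.symm
      · simp
      · intro y z _ _ hy hz
        simp only [map_add]
        rw [hy, hz]
      · intro c y _ hy
        simp only [map_smul]
        rw [hy]
    · -- current vertex out of range
      have hx0 : x = 0 := hss i hcur x
      subst hx0
      simp only [map_zero]
  · -- next vertex out of range
    haveI : Subsingleton ((IntervalRep k N (SD.a s₀) (SD.b s₀)).V ⟨(i : ℕ) + 1, h⟩) :=
      interval_subsingleton (k := k) hnext
    exact Subsingleton.elim _ _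
lemma ite_one_mem {P : Prop} [Decidable P] (hP : P) :
    (1 : k) ∈ (if P then (⊤ : Submodule k k) else ⊥) := by
  rw [if_pos hP]; trivial

lemma ite_all_zero {P : Prop} [Decidable P] (hP : ¬P)
    (x : ↥(if P then (⊤ : Submodule k k) else ⊥)) : x = 0 := by
  apply Subtype.ext
  obtain ⟨v, hv⟩ := x
  rw [if_neg hP] at hv
  simpa using hv

lemma ite_submodule_dich {P : Prop} [Decidable P]
    (r : Submodule k ↥(if P then (⊤ : Submodule k k) else ⊥)) (hr : r ≠ ⊥) : r = ⊤ := by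
  obtain ⟨x, hxr, hx0⟩ := Submodule.exists_mem_ne_zero_of_ne_bot hr
  have hxv : (x : k) ≠ 0 := fun hv => hx0 (Subtype.ext hv)
  rw [eq_top_iff]
  intro y _
  have hy : y = ((y : k) * (x : k)⁻¹) • x := by
    apply Subtype.ext
    rw [SetLike.val_smul, smul_eq_mul, inv_mul_cancel_right₀ hxv]
  rw [hy]
  exact r.smul_mem _ hxr

lemma part1_main (a b : ℕ) (hab : a ≤ b) (hbN : b < N) :
    QuivIndecomposable k N (IntervalRep k N a b) := by
  have hA : a < N := lt_of_le_of_lt hab hbN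
  constructor
  · refine ⟨⟨a, hA⟩, ⟨1, ite_one_mem ⟨le_rfl, hab⟩⟩, fun hc => ?_⟩
    exact one_ne_zero (congrArg Subtype.val hc)
  · intro p q hp hq hc
    -- propagation of being ⊤ along the interval
    have hprop : ∀ (r : ∀ i, Submodule k ((IntervalRep k N a b).V i)),
        IsSubrep k N (IntervalRep k N a b) r → r ⟨a, hA⟩ = ⊤ →
        ∀ d, a + d ≤ b → ∀ (hd : a + d < N), r ⟨a + d, hd⟩ = ⊤ := by
      intro r hr htop d
      induction d with
      | zero => intro _ _; exact htop
      | succ d ih =>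
        intro hle hd
        have htop_d := ih (by omega) (by omega)
        have hlt : a + d + 1 < N := hd
        have hf := hr ⟨a + d, by omega⟩ hlt
          ⟨1, ite_one_mem (P := a ≤ a + d ∧ a + d ≤ b) ⟨by omega, by omega⟩⟩
          (by rw [htop_d]; trivial)
        have hgoal : r ⟨a + d + 1, hlt⟩ = ⊤ → r ⟨a + (d + 1), hd⟩ = ⊤ := fun hh => hh
        apply hgoal
        apply ite_submodule_dich
        intro hbot
        have hf' : (IntervalRep k N a b).f ⟨a + d, by omega⟩ hlt
            ⟨1, ite_one_mem (P := a ≤ a + d ∧ a + d ≤ b) ⟨by omega, by omega⟩⟩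
            ∈ r ⟨a + d + 1, hlt⟩ := hf
        replace hf' := (Submodule.eq_bot_iff _).mp hbot _ hf'
        have hval := congrArg Subtype.val hf'
        erw [IntervalRep_f_val] at hval
        rw [if_pos (show a ≤ a + d + 1 ∧ a + d + 1 ≤ b by omega)] at hval
        exact one_ne_zero hval
    -- out of range vertices are trivial
    have hout : ∀ (r : ∀ i, Submodule k ((IntervalRep k N a b).V i)) (i : Fin N),
        ¬(a ≤ (i : ℕ) ∧ (i : ℕ) ≤ b) → r i = ⊥ := by
      intro r i hi
      rw [eq_bot_iff]
      intro x _
      rw [Submodule.mem_bot]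
      exact ite_all_zero hi x
    -- in-range evaluation given the top propagation
    have hall : ∀ (r r' : ∀ i, Submodule k ((IntervalRep k N a b).V i)),
        IsSubrep k N (IntervalRep k N a b) r → (∀ i, IsCompl (r i) (r' i)) →
        r ⟨a, hA⟩ = ⊤ → ∀ i, r' i = ⊥ := by
      intro r r' hr hcc htop i
      by_cases hin : a ≤ (i : ℕ) ∧ (i : ℕ) ≤ b
      · have hieq : i = ⟨a + ((i : ℕ) - a), by omega⟩ :=
          Fin.ext (show (i : ℕ) = a + ((i : ℕ) - a) by omega)
        rw [hieq]
        have hri : r ⟨a + ((i : ℕ) - a), by omega⟩ = ⊤ :=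
          hprop r hr htop _ (by omega) (by omega)
        rw [eq_bot_iff]
        intro x hx
        refine (hcc _).disjoint.le_bot (Submodule.mem_inf.mpr ⟨?_, hx⟩)
        rw [hri]
        trivial
      · exact hout r' i hin
    by_cases hpa : p ⟨a, hA⟩ = ⊥
    · left
      have hqa : q ⟨a, hA⟩ = ⊤ := by
        have := codisjoint_iff.mp (hc ⟨a, hA⟩).codisjoint
        rw [hpa, bot_sup_eq] at this
        exact this
      exact hall q p hq (fun i => (hc i).symm) hqa
    · right
      have hpa' : p ⟨a, hA⟩ = ⊤ := ite_submodule_dich _ hpa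
      exact hall p q hp hc hpa'


end Gabriel

/-- Each interval representation `[a;b]` (with `a ≤ b < N`) of the
linear quiver `A_N` is indecomposable, and every (finite-dimensional)
indecomposable representation is isomorphic to some interval representation. -/
theorem gabriel_linear_quiver (k : Type u) [Field k] (N : ℕ)
    (X : QuivRep.{u, v} k N) [∀ i, FiniteDimensional k (X.V i)] :
    (∀ a b : ℕ, a ≤ b → b < N → QuivIndecomposable k N (IntervalRep k N a b)) ∧
    (QuivIndecomposable k N X →
      ∃ a b : ℕ, a ≤ b ∧ b < N ∧ Nonempty (QuivIso k N X (IntervalRep k N a b))) := by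
  exact ⟨fun a b hab hbN => part1_main a b hab hbN, fun hX => part2_main X hX⟩
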